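/- Let G be an abelian group with torsion subgroup T, let h : G → G be a group endomorphism, and let h̄ : G/T → G/T be the endomorphism induced by h on the quotient G/T. If the torsion subgroup of the cokernel coker(h) = G/h(G) is finite, then the torsion subgroup of coker(h̄) = (G/T)/h̄(G/T) is also finite and its cardinality satisfies |tors(coker(h̄))| ≤ |tors(coker(h))|. -/
import Mathlib


/-- Let `G` be an abelian group with torsion subgroup `T`, `h : G → G` an endomorphism and
`h̄ : G/T → G/T` the induced endomorphism (characterized by commuting with the quotient map).
If the torsion subgroup of `coker h = G / h(G)` is finite, then the torsion subgroup of
`coker h̄ = (G/T) / h̄(G/T)` is finite and its cardinality is at most that of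
the torsion subgroup of `coker h`. -/
theorem torsion_coker_induced_le {G : Type*} [AddCommGroup G] (h : G →+ G)
    (hbar : (G ⧸ AddCommGroup.torsion G) →+ (G ⧸ AddCommGroup.torsion G))
    (hcomm : ∀ g : G, hbar (QuotientAddGroup.mk g) = QuotientAddGroup.mk (h g))
    (hfin : Finite (AddCommGroup.torsion (G ⧸ h.range))) :
    Finite (AddCommGroup.torsion ((G ⧸ AddCommGroup.torsion G) ⧸ hbar.range)) ∧
      Nat.card (AddCommGroup.torsion ((G ⧸ AddCommGroup.torsion G) ⧸ hbar.range)) ≤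
        Nat.card (AddCommGroup.torsion (G ⧸ h.range)) := by
  let T := AddCommGroup.torsion G
  let π : G →+ ((G ⧸ T) ⧸ hbar.range) :=
    (QuotientAddGroup.mk' hbar.range).comp (QuotientAddGroup.mk' T)
  have hker : h.range ≤ π.ker := by
    rintro _ ⟨a, rfl⟩
    simp only [π, AddMonoidHom.mem_ker, AddMonoidHom.comp_apply, QuotientAddGroup.mk'_apply,
      QuotientAddGroup.eq_zero_iff]
    exact ⟨QuotientAddGroup.mk a, hcomm a⟩
  let f : (G ⧸ h.range) →+ ((G ⧸ T) ⧸ hbar.range) := QuotientAddGroup.lift h.range π hker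
  have hf : ∀ g : G, f (QuotientAddGroup.mk g) = π g := fun _ => rfl
  -- restriction of f to torsion subgroups
  let F : AddCommGroup.torsion (G ⧸ h.range) →
      AddCommGroup.torsion ((G ⧸ T) ⧸ hbar.range) :=
    fun x => ⟨f x.1, f.isOfFinAddOrder x.2⟩
  have hFsurj : Function.Surjective F := by
    rintro ⟨y, hy⟩
    -- lift y to g : G
    obtain ⟨y', rfl⟩ := QuotientAddGroup.mk'_surjective hbar.range y
    obtain ⟨g, rfl⟩ := QuotientAddGroup.mk'_surjective T y'
    rw [AddCommGroup.mem_torsion, isOfFinAddOrder_iff_nsmul_eq_zero] at hy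
    obtain ⟨n, hn, hny⟩ := hy
    -- n • (mk g) ∈ hbar.range
    have : (QuotientAddGroup.mk (n • g) : G ⧸ T) ∈ hbar.range := by
      rw [← QuotientAddGroup.eq_zero_iff]
      simpa using hny
    obtain ⟨z, hz⟩ := this
    obtain ⟨a, rfl⟩ := QuotientAddGroup.mk'_surjective T z
    rw [QuotientAddGroup.mk'_apply, hcomm] at hz
    have ht : n • g - h a ∈ T := by
      rw [← QuotientAddGroup.eq_iff_sub_mem, ← hz]
    rw [AddCommGroup.mem_torsion, isOfFinAddOrder_iff_nsmul_eq_zero] at ht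
    obtain ⟨m, hm, hmt⟩ := ht
    have hgt : ((m * n) • (QuotientAddGroup.mk g : G ⧸ h.range)) = 0 := by
      rw [← QuotientAddGroup.mk_nsmul, QuotientAddGroup.eq_zero_iff]
      refine ⟨m • a, ?_⟩
      have : m • (n • g - h a) = 0 := hmt
      rw [smul_sub, sub_eq_zero] at this
      rw [map_nsmul, mul_smul]
      exact this.symm
    refine ⟨⟨QuotientAddGroup.mk g, ?_⟩, rfl⟩
    rw [AddCommGroup.mem_torsion, isOfFinAddOrder_iff_nsmul_eq_zero]
    exact ⟨m * n, Nat.mul_pos hm hn, hgt⟩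
  refine ⟨Finite.of_surjective F hFsurj, Nat.card_le_card_of_surjective F hFsurj⟩
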